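/- For every integer k with 1 ≤ k ≤ 3, RR(x+y+kz=(k+1)w) = 4; that is, N = 4 is the least positive integer such that every 2-coloring χ : {1,…,N} → {0,1} admits positive integers x,y,z,w ≤ N with χ(x)=χ(y)=χ(z)=χ(w) and x + y + k·z = (k+1)·w. -/

import Mathlib

/-- The set of positive integers `N` such that every 2-coloring of `{1, ..., N}`
admits a monochromatic solution to `x + y + k*z = l*w`. -/
def radoSet (k l : ℕ) : Set ℕ :=
  {N : ℕ | 0 < N ∧ ∀ χ : ℕ → Fin 2, ∃ x y z w : ℕ,
    x ∈ Finset.Icc 1 N ∧ y ∈ Finset.Icc 1 N ∧ z ∈ Finset.Icc 1 N ∧ w ∈ Finset.Icc 1 N ∧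
    χ x = χ y ∧ χ y = χ z ∧ χ z = χ w ∧ x + y + k * z = l * w}

lemma rado_key : ∀ k : Fin 3, ∀ c : Fin 4 → Fin 2, ∃ x y z w : Fin 4,
    c x = c y ∧ c y = c z ∧ c z = c w ∧
    (x.1 + 1) + (y.1 + 1) + (k.1 + 1) * (z.1 + 1) = (k.1 + 2) * (w.1 + 1) := by
  decide

/-- For `1 ≤ k ≤ 3`, `RR(x + y + k*z = (k+1)*w) = 4`. -/
theorem RR_k_add_one_small (k : ℕ) (hk1 : 1 ≤ k) (hk3 : k ≤ 3) :
    IsLeast (radoSet k (k + 1)) 4 := by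
  constructor
  · refine ⟨by norm_num, fun χ => ?_⟩
    obtain ⟨x, y, z, w, c1, c2, c3, heq⟩ :=
      rado_key ⟨k - 1, by omega⟩ (fun i : Fin 4 => χ (i.1 + 1))
    refine ⟨x.1 + 1, y.1 + 1, z.1 + 1, w.1 + 1, ?_, ?_, ?_, ?_, c1, c2, c3, ?_⟩
    · simp [Finset.mem_Icc] <;> omega
    · simp [Finset.mem_Icc] <;> omega
    · simp [Finset.mem_Icc] <;> omega
    · simp [Finset.mem_Icc] <;> omega
    · simp only at heq
      have hk' : k - 1 + 1 = k := by omega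
      have hk'' : k - 1 + 2 = k + 1 := by omega
      rw [hk', hk''] at heq
      exact heq
  · intro m hm
    by_contra h
    obtain ⟨hm0, hχ⟩ := hm
    obtain ⟨x, y, z, w, hx, hy, hz, hw, c1, c2, c3, heq⟩ :=
      hχ (fun n => if n = 2 then 1 else 0)
    simp only [Finset.mem_Icc] at hx hy hz hw
    have hx1 : 1 ≤ x := hx.1
    have hx3 : x ≤ 3 := by omega
    have hy1 : 1 ≤ y := hy.1
    have hy3 : y ≤ 3 := by omega
    have hz1 : 1 ≤ z := hz.1
    have hz3 : z ≤ 3 := by omega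
    have hw1 : 1 ≤ w := hw.1
    have hw3 : w ≤ 3 := by omega
    clear hx hy hz hw hχ h hm0
    interval_cases x <;> interval_cases y <;> interval_cases z <;> interval_cases w <;>
      first
        | omega
        | exact absurd c1 (by decide)
        | exact absurd c2 (by decide)
        | exact absurd c3 (by decide)
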